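/- Let $a,b>0$ and $t>0$. Then $\exp\big(-t\,\frac{-b+\sqrt{b^2+16a\pi^2|\xi|^2}}{2a}\big)=\int_0^\infty e^{-\pi\lambda|\xi|^2}\,e^{\frac{tb}{2a}}\,\frac{t}{\sqrt{a}}\,e^{-\frac{\lambda b^2}{16\pi a}}\,e^{-\frac{\pi t^2}{a\lambda}}\,\lambda^{-3/2}\,d\lambda$ for every $\xi\in\mathbb{R}^d$. -/

import Mathlib

open MeasureTheory Real Set


lemma glasser_aux (c : ℝ) (hc : 0 < c) :
    ∫ x in Ioi (0:ℝ), Real.exp (-x^2 - c^2/x^2) = Real.sqrt π / 2 * Real.exp (-2*c) := by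
  set F : ℝ → ℝ := fun x => Real.exp (-x^2 - c^2/x^2) with hF
  have hc0 : c ≠ 0 := hc.ne'
  have hFmeas : Measurable F := by fun_prop
  have hFsymm : ∀ x : ℝ, 0 < x → F (c/x) = F x := by
    intro x hx
    rw [hF]
    simp only
    congr 1
    field_simp
    ring
  have hFint : IntegrableOn F (Ioi 0) := by
    apply Integrable.integrableOn
    apply (integrable_exp_neg_mul_sq one_pos).mono hFmeas.aestronglyMeasurable
    filter_upwards with x
    rw [Real.norm_eq_abs, Real.norm_eq_abs, abs_of_pos (Real.exp_pos _),
      abs_of_pos (Real.exp_pos _)]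
    apply Real.exp_le_exp.2
    have : 0 ≤ c^2/x^2 := by positivity
    nlinarith
  -- step 1 : substitution x ↦ c / x
  have hderiv1 : ∀ x ∈ Ioi (0:ℝ), HasDerivWithinAt (fun x => c / x) (-c/x^2) (Ioi 0) x := by
    intro x hx
    have hx0 : x ≠ 0 := (ne_of_gt hx)
    have := (hasDerivAt_const x c).div (hasDerivAt_id x) hx0
    refine (HasDerivAt.hasDerivWithinAt ?_)
    convert this using 1
    · rfl
    · rfl
    simp only [id_eq]
    field_simp
    ring
  have hinj1 : InjOn (fun x => c / x) (Ioi (0:ℝ)) := by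
    intro x hx y hy h
    simp only at h
    rw [div_eq_div_iff (ne_of_gt hx) (ne_of_gt hy)] at h
    exact (mul_left_cancel₀ hc0 h).symm
  have himg1 : (fun x => c / x) '' Ioi (0:ℝ) = Ioi 0 := by
    ext y
    constructor
    · rintro ⟨x, hx, rfl⟩
      exact div_pos hc hx
    · intro hy
      exact ⟨c / y, div_pos hc hy, by field_simp⟩
  have key1 : ∫ y in Ioi (0:ℝ), F y = ∫ x in Ioi (0:ℝ), |(-c/x^2)| • F (c/x) := by
    conv_lhs => rw [← himg1]
    exact integral_image_eq_integral_abs_deriv_smul measurableSet_Ioi hderiv1 hinj1 F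
  have h1 : ∫ x in Ioi (0:ℝ), (c/x^2) * F x = ∫ x in Ioi (0:ℝ), F x := by
    rw [key1]
    apply setIntegral_congr_fun measurableSet_Ioi
    intro x hx
    have hxpos : 0 < x := hx
    simp only [smul_eq_mul]
    rw [abs_div, abs_neg, abs_of_pos hc, abs_of_pos (pow_pos hxpos 2), hFsymm x hxpos]
  have h1int : IntegrableOn (fun x => (c/x^2) * F x) (Ioi (0:ℝ)) := by
    have h := (integrableOn_image_iff_integrableOn_abs_deriv_smul measurableSet_Ioi hderiv1
      hinj1 F).1 (by rwa [himg1])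
    apply h.congr_fun _ measurableSet_Ioi
    intro x hx
    have hxpos : 0 < x := hx
    simp only [smul_eq_mul]
    rw [abs_div, abs_neg, abs_of_pos hc, abs_of_pos (pow_pos hxpos 2), hFsymm x hxpos]
  -- step 2 : substitution y = x - c/x maps Ioi 0 onto ℝ
  have hderiv2 : ∀ x ∈ Ioi (0:ℝ), HasDerivWithinAt (fun x => x - c / x) (1 + c/x^2) (Ioi 0) x := by
    intro x hx
    have hx0 : x ≠ 0 := ne_of_gt hx
    have hd := ((hasDerivAt_id x).sub ((hasDerivAt_const x c).div (hasDerivAt_id x) hx0))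
    refine HasDerivAt.hasDerivWithinAt ?_
    convert hd using 1
    · rfl
    simp only [id_eq]
    field_simp
    ring
  have hmono2 : StrictMonoOn (fun x => x - c / x) (Ioi (0:ℝ)) := by
    intro x hx y hy hxy
    have : c / y < c / x := div_lt_div_of_pos_left hc hx hxy
    simp only
    linarith
  have himg2 : (fun x => x - c / x) '' Ioi (0:ℝ) = univ := by
    ext y
    simp only [mem_image, mem_univ, iff_true]
    have hs : 0 < Real.sqrt (y^2 + 4*c) := Real.sqrt_pos.2 (by positivity)
    have hs2 : Real.sqrt (y^2 + 4*c) ^ 2 = y^2 + 4*c := Real.sq_sqrt (by positivity)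
    have hsy : |y| < Real.sqrt (y^2 + 4*c) := by
      nlinarith [abs_nonneg y, sq_abs y]
    have hxpos : 0 < (y + Real.sqrt (y^2 + 4*c)) / 2 := by
      have := neg_abs_le y; nlinarith
    refine ⟨(y + Real.sqrt (y^2 + 4*c)) / 2, hxpos, ?_⟩
    have hkey : c = (y + Real.sqrt (y^2 + 4*c)) / 2 * ((y + Real.sqrt (y^2 + 4*c)) / 2 - y) := by
      nlinarith
    have hxne : y + Real.sqrt (y^2 + 4*c) ≠ 0 := ne_of_gt (by linarith)
    field_simp
    nlinarith [hs2]
  have key2 : ∫ y, Real.exp (-2*c) * Real.exp (-y^2)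
      = ∫ x in Ioi (0:ℝ), |1 + c/x^2| • (Real.exp (-2*c) * Real.exp (-(x - c/x)^2)) := by
    rw [← setIntegral_univ, ← himg2]
    exact integral_image_eq_integral_abs_deriv_smul measurableSet_Ioi hderiv2 hmono2.injOn _
  have h2 : ∫ x in Ioi (0:ℝ), (1 + c/x^2) * F x = Real.exp (-2*c) * Real.sqrt π := by
    have hgauss : ∫ y : ℝ, Real.exp (-2*c) * Real.exp (-y^2) = Real.exp (-2*c) * Real.sqrt π := by
      rw [integral_const_mul]
      congr 1
      simpa using integral_gaussian 1
    rw [← hgauss, key2]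
    apply setIntegral_congr_fun measurableSet_Ioi
    intro x hx
    have hxpos : 0 < x := hx
    have hx0 : x ≠ 0 := ne_of_gt hxpos
    simp only [smul_eq_mul]
    rw [abs_of_pos (by positivity : (0:ℝ) < 1 + c/x^2), ← Real.exp_add, hF]
    simp only
    congr 1
    field_simp
    ring
  have hsplit : ∫ x in Ioi (0:ℝ), (1 + c/x^2) * F x
      = (∫ x in Ioi (0:ℝ), F x) + ∫ x in Ioi (0:ℝ), (c/x^2) * F x := by
    rw [← integral_add hFint h1int]
    apply setIntegral_congr_fun measurableSet_Ioi
    intro x hx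
    ring
  have h3 : (2:ℝ) * ∫ x in Ioi (0:ℝ), F x = Real.exp (-2*c) * Real.sqrt π := by
    rw [← h2, hsplit, h1]; ring
  linarith [h3]

lemma subord_aux (A B : ℝ) (hA : 0 < A) (hB : 0 < B) :
    ∫ l in Ioi (0:ℝ), l ^ (-(3:ℝ)/2) * Real.exp (-(B/l) - A*l)
      = Real.sqrt π / Real.sqrt B * Real.exp (-2 * Real.sqrt (A*B)) := by
  set f : ℝ → ℝ := fun l => l ^ (-(3:ℝ)/2) * Real.exp (-(B/l) - A*l) with hf
  have hB0 : B ≠ 0 := hB.ne'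
  have hderiv : ∀ x ∈ Ioi (0:ℝ), HasDerivWithinAt (fun x => B / x^2) (-2*B/x^3) (Ioi 0) x := by
    intro x hx
    have hx0 : x ≠ 0 := ne_of_gt hx
    have hd := (hasDerivAt_const x B).div (hasDerivAt_pow 2 x) (pow_ne_zero 2 hx0)
    refine HasDerivAt.hasDerivWithinAt ?_
    convert hd using 1
    · rfl
    · rfl
    field_simp
    ring
  have hinj : InjOn (fun x => B / x^2) (Ioi (0:ℝ)) := by
    intro x hx y hy h
    simp only at h
    rw [div_eq_div_iff (pow_ne_zero 2 (ne_of_gt hx)) (pow_ne_zero 2 (ne_of_gt hy))] at h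
    have hsq : y^2 = x^2 := mul_left_cancel₀ hB0 h
    have hz : (x - y) * (x + y) = 0 := by linear_combination -hsq
    rcases mul_eq_zero.1 hz with h' | h'
    · linarith [sub_eq_zero.1 h']
    · exfalso
      have hx' : (0:ℝ) < x := hx
      have hy' : (0:ℝ) < y := hy
      linarith
  have himg : (fun x => B / x^2) '' Ioi (0:ℝ) = Ioi 0 := by
    ext y
    constructor
    · rintro ⟨x, hx, rfl⟩
      exact div_pos hB (pow_pos hx 2)
    · intro hy
      have hy' : (0:ℝ) < y := hy
      refine ⟨Real.sqrt (B/y), Real.sqrt_pos.2 (div_pos hB hy'), ?_⟩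
      simp only
      rw [Real.sq_sqrt (le_of_lt (div_pos hB hy'))]
      field_simp
  have key : ∫ l in Ioi (0:ℝ), f l = ∫ x in Ioi (0:ℝ), |(-2*B/x^3)| • f (B/x^2) := by
    conv_lhs => rw [← himg]
    exact integral_image_eq_integral_abs_deriv_smul measurableSet_Ioi hderiv hinj f
  have hcpos : 0 < Real.sqrt (A*B) := Real.sqrt_pos.2 (by positivity)
  have hc2 : Real.sqrt (A*B)^2 = A*B := Real.sq_sqrt (by positivity)
  have hsB : (0:ℝ) < Real.sqrt B := Real.sqrt_pos.2 hB
  have key2 : ∫ x in Ioi (0:ℝ), |(-2*B/x^3)| • f (B/x^2)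
      = ∫ x in Ioi (0:ℝ), (2/Real.sqrt B) * Real.exp (-x^2 - (Real.sqrt (A*B))^2/x^2) := by
    apply setIntegral_congr_fun measurableSet_Ioi
    intro x hx
    have hxpos : 0 < x := hx
    have hx0 : x ≠ 0 := ne_of_gt hxpos
    have hr : (0:ℝ) < B / x^2 := div_pos hB (pow_pos hxpos 2)
    simp only [smul_eq_mul, hf]
    rw [abs_div, abs_mul, abs_neg, abs_two, abs_of_pos hB, abs_of_pos (pow_pos hxpos 3), hc2]
    have h1 : (B/x^2 : ℝ) ^ (-(3:ℝ)/2) = (Real.sqrt (B/x^2) * (B/x^2))⁻¹ := by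
      rw [show (-(3:ℝ)/2) = -(1/2 + 1) by norm_num, Real.rpow_neg hr.le,
        Real.rpow_add hr, Real.rpow_one, ← Real.sqrt_eq_rpow]
    have h2 : Real.sqrt (B/x^2) = Real.sqrt B / x := by
      rw [Real.sqrt_div hB.le, Real.sqrt_sq hxpos.le]
    have h3 : -(B/(B/x^2)) - A*(B/x^2) = -x^2 - A*B/x^2 := by
      field_simp
    rw [h1, h2, h3]
    field_simp
  rw [key, key2, integral_const_mul, glasser_aux _ hcpos]
  field_simp

/-- The explicit Schoenberg/subordination representation of the kernel
`φ̂_{a,b}(ξ,t)` as an average of Gaussians: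
`exp(-t(-b+√(b²+16aπ²|ξ|²))/(2a))
  = ∫_0^∞ e^{-πλ|ξ|²} e^{tb/(2a)} (t/√a) e^{-λb²/(16πa)} e^{-πt²/(aλ)} λ^{-3/2} dλ`. -/
theorem stmt5 (d : ℕ) (a b t : ℝ) (ha : 0 < a) (hb : 0 < b) (ht : 0 < t)
    (ξ : EuclideanSpace ℝ (Fin d)) :
    Real.exp (-t * ((-b + Real.sqrt (b ^ 2 + 16 * a * π ^ 2 * ‖ξ‖ ^ 2)) / (2 * a))) =
      ∫ l in Ioi (0 : ℝ),
        Real.exp (-(π * l * ‖ξ‖ ^ 2)) * (Real.exp (t * b / (2 * a)) * (t / Real.sqrt a) *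
          Real.exp (-(l * b ^ 2 / (16 * π * a))) * Real.exp (-(π * t ^ 2 / (a * l))) *
          l ^ (-(3 : ℝ) / 2)) := by
  have hπ : (0:ℝ) < π := pi_pos
  set A : ℝ := π * ‖ξ‖^2 + b^2/(16*π*a) with hAdef
  set B : ℝ := π * t^2 / a with hBdef
  have hApos : 0 < A := by positivity
  have hBpos : 0 < B := by positivity
  have hcongr : (∫ l in Ioi (0 : ℝ),
        Real.exp (-(π * l * ‖ξ‖ ^ 2)) * (Real.exp (t * b / (2 * a)) * (t / Real.sqrt a) *
          Real.exp (-(l * b ^ 2 / (16 * π * a))) * Real.exp (-(π * t ^ 2 / (a * l))) *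
          l ^ (-(3 : ℝ) / 2)))
      = Real.exp (t * b / (2 * a)) * (t / Real.sqrt a) *
          ∫ l in Ioi (0:ℝ), l ^ (-(3:ℝ)/2) * Real.exp (-(B/l) - A*l) := by
    rw [← integral_const_mul]
    apply setIntegral_congr_fun measurableSet_Ioi
    intro l hl
    have hl0 : (l:ℝ) ≠ 0 := ne_of_gt hl
    have harg : -(B/l) - A*l = -(π * l * ‖ξ‖ ^ 2) + (-(l * b ^ 2 / (16 * π * a)) +
        -(π * t ^ 2 / (a * l))) := by
      rw [hAdef, hBdef]
      field_simp
      ring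
    simp only
    rw [harg, Real.exp_add, Real.exp_add]
    ring
  rw [hcongr, subord_aux A B hApos hBpos]
  have hsB : Real.sqrt B = Real.sqrt π * t / Real.sqrt a := by
    rw [hBdef, show π * t^2 / a = π * t^2 / a from rfl, Real.sqrt_div (by positivity),
      Real.sqrt_mul hπ.le, Real.sqrt_sq ht.le]
  have hAB : Real.sqrt (A*B) = t/(4*a) * Real.sqrt (b^2 + 16*a*π^2*‖ξ‖^2) := by
    have h1 : A*B = (t/(4*a))^2 * (b^2 + 16*a*π^2*‖ξ‖^2) := by
      rw [hAdef, hBdef]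
      field_simp
      ring
    rw [h1, Real.sqrt_mul (sq_nonneg _), Real.sqrt_sq (by positivity)]
  rw [hsB, hAB]
  have hsa : (0:ℝ) < Real.sqrt a := Real.sqrt_pos.2 ha
  have hsπ : (0:ℝ) < Real.sqrt π := Real.sqrt_pos.2 hπ
  have hscal : t / Real.sqrt a * (Real.sqrt π / (Real.sqrt π * t / Real.sqrt a)) = 1 := by
    field_simp
  rw [show Real.exp (t * b / (2 * a)) * (t / Real.sqrt a) *
      (Real.sqrt π / (Real.sqrt π * t / Real.sqrt a) *
        Real.exp (-2 * (t/(4*a) * Real.sqrt (b^2 + 16*a*π^2*‖ξ‖^2))))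
      = Real.exp (t * b / (2 * a)) *
        Real.exp (-2 * (t/(4*a) * Real.sqrt (b^2 + 16*a*π^2*‖ξ‖^2))) *
        (t / Real.sqrt a * (Real.sqrt π / (Real.sqrt π * t / Real.sqrt a))) from by ring,
    hscal, mul_one, ← Real.exp_add]
  congr 1
  field_simp
  ring
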